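/- arXiv:0804.4246 — 9 statements merged into one kernel-verified Lean document; each statement's English description precedes it below -/
import Mathlib

section
/- Let R be a ℤ-graded ring and let T = ⊕_{n∈ℤ} T^n be a ℤ-graded R-module. If T has bounded finitely generated submodules and if for every integer m there exists an integer n < m with T^n ≠ 0 (i.e., T^n ≠ 0 for arbitrarily negative n), then T is not finitely generated as an R-module. -/
open DirectSum

/-- A ℤ-graded module `T` (with grading `ℳ`) over a ℤ-graded ring `R` (with grading `𝒜`)
has *bounded finitely generated submodules* if for every integer `m` there is an integer `N`
such that the `R`-submodule of `T` generated by `⊕_{n > m} T^n` is contained in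
`⊕_{n > N} T^n`, i.e. every element of that submodule has all of its homogeneous components
in degrees `> N`. -/
def HasBoundedFGSubmodules {R T : Type*} [Ring R] [AddCommGroup T] [Module R T]
    (ℳ : ℤ → AddSubgroup T) [DirectSum.Decomposition ℳ] : Prop :=
  ∀ m : ℤ, ∃ N : ℤ,
    ∀ x ∈ Submodule.span R (⋃ n > m, (ℳ n : Set T)),
      ∀ n : ℤ, n ≤ N → (DirectSum.decompose ℳ x n : T) = 0

lemma exists_lt_of_finset_int (t : Finset ℤ) : ∃ m : ℤ, ∀ i ∈ t, m < i := by
  rcases t.eq_empty_or_nonempty with h | h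
  · exact ⟨0, by simp [h]⟩
  · exact ⟨t.min' h - 1, fun i hi => by have := t.min'_le i hi; omega⟩

/-- If a ℤ-graded module `T` over a ℤ-graded ring `R` has bounded finitely generated
submodules and `T^n ≠ 0` for arbitrarily negative `n`, then `T` is not a finitely
generated `R`-module. -/
theorem not_finite_of_hasBoundedFGSubmodules
    {R T : Type*} [Ring R] [AddCommGroup T] [Module R T]
    (𝒜 : ℤ → AddSubgroup R) (ℳ : ℤ → AddSubgroup T)
    [GradedRing 𝒜] [DirectSum.Decomposition ℳ] [SetLike.GradedSMul 𝒜 ℳ]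
    (hbfgs : HasBoundedFGSubmodules (R := R) ℳ)
    (hneg : ∀ m : ℤ, ∃ n < m, ℳ n ≠ ⊥) :
    ¬ Module.Finite R T := by
  classical
  intro hfin
  have key : ∀ x : T, ∃ m : ℤ, x ∈ Submodule.span R (⋃ n > m, (ℳ n : Set T)) := by
    intro x
    obtain ⟨m, hm⟩ := exists_lt_of_finset_int (DFinsupp.support (decompose ℳ x))
    refine ⟨m, ?_⟩
    rw [← DirectSum.sum_support_decompose ℳ x]
    refine Submodule.sum_mem _ fun i hi => Submodule.subset_span ?_
    exact Set.mem_biUnion (hm i hi) (decompose ℳ x i).2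
  obtain ⟨s, hs⟩ := hfin.fg_top
  choose f hf using key
  obtain ⟨m, hm⟩ := exists_lt_of_finset_int (s.image f)
  have htop : ∀ x : T, x ∈ Submodule.span R (⋃ n > m, (ℳ n : Set T)) := by
    have hsle : (s : Set T) ⊆ (Submodule.span R (⋃ n > m, (ℳ n : Set T)) : Set T) := by
      intro g hg
      have hmg : m < f g := hm _ (Finset.mem_image_of_mem f hg)
      have hsub : (⋃ n > f g, (ℳ n : Set T)) ⊆ ⋃ n > m, (ℳ n : Set T) := by
        refine Set.iUnion₂_subset fun n hn => ?_
        exact Set.subset_iUnion₂ (s := fun i _ => (ℳ i : Set T)) n (show n > m by omega)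
      exact Submodule.span_mono hsub (hf g)
    intro x
    have : (⊤ : Submodule R T) ≤ Submodule.span R (⋃ n > m, (ℳ n : Set T)) := by
      rw [← hs]
      exact Submodule.span_le.mpr hsle
    exact this Submodule.mem_top
  obtain ⟨N, hN⟩ := hbfgs m
  obtain ⟨n, hnN, hn⟩ := hneg N
  rw [AddSubgroup.ne_bot_iff_exists_ne_zero] at hn
  obtain ⟨⟨y, hy⟩, hy0⟩ := hn
  have := hN y (htop y) n hnN.le
  rw [DirectSum.decompose_of_mem_same ℳ hy] at this
  exact hy0 (Subtype.ext this)
end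

section
/- Let R = ⊕_{n∈ℤ} R^n and A = ⊕_{n∈ℤ} A^n be ℤ-graded rings and let φ : R → A be a ring homomorphism preserving degrees, i.e., φ(R^n) ⊆ A^n for all n ∈ ℤ. Suppose that A, regarded as a ℤ-graded R-module via φ, has bounded finitely generated submodules. Then every ℤ-graded left A-module T, regarded as a ℤ-graded R-module via φ, has bounded finitely generated submodules. -/
open DirectSum

/-- Let `φ : R → A` be a degree-preserving ring homomorphism of ℤ-graded rings.  If `A`,
regarded as a ℤ-graded `R`-module via `φ`, has bounded finitely generated submodules, then
every ℤ-graded left `A`-module `T`, regarded as a ℤ-graded `R`-module via `φ`, has bounded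
finitely generated submodules. -/
theorem hasBoundedFGSubmodules_of_gradedRingHom
    {R A T : Type*} [Ring R] [Ring A] [AddCommGroup T]
    (𝒜 : ℤ → AddSubgroup R) (ℬ : ℤ → AddSubgroup A) (𝒯 : ℤ → AddSubgroup T)
    [GradedRing 𝒜] [GradedRing ℬ] [DirectSum.Decomposition 𝒯]
    [Module A T] [SetLike.GradedSMul ℬ 𝒯]
    (φ : R →+* A) (hφ : ∀ n : ℤ, ∀ r ∈ 𝒜 n, φ r ∈ ℬ n)
    [Module R A] (hRA : ∀ (r : R) (x : A), r • x = φ r * x)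
    [Module R T] (hRT : ∀ (r : R) (t : T), r • t = φ r • t)
    (hA : HasBoundedFGSubmodules (R := R) ℬ) :
    HasBoundedFGSubmodules (R := R) 𝒯 := by
  classical
  intro m
  obtain ⟨N₀, hN₀⟩ := hA (-1)
  -- every `φ r` has homogeneous components concentrated in degrees `> N₀`
  have hφr : ∀ r : R, ∀ k : ℤ, k ≤ N₀ → (DirectSum.decompose ℬ (φ r) k : A) = 0 := by
    intro r k hk
    refine hN₀ (φ r) ?_ k hk
    have h1 : (1 : A) ∈ Submodule.span R (⋃ n > (-1 : ℤ), (ℬ n : Set A)) := by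
      apply Submodule.subset_span
      exact Set.mem_biUnion (by norm_num : (-1 : ℤ) < 0) (SetLike.one_mem_graded ℬ)
    have := Submodule.smul_mem _ r h1
    rwa [hRA, mul_one] at this
  refine ⟨N₀ + m + 1, ?_⟩
  -- key computation for a single generator
  have key : ∀ (r : R) (t : T) (j : ℤ), m < j → t ∈ 𝒯 j →
      ∀ n : ℤ, n ≤ N₀ + m + 1 → (DirectSum.decompose 𝒯 (r • t) n : T) = 0 := by
    intro r t j hj ht n hn
    rw [hRT]
    have hrepr : φ r • t =
        ∑ k ∈ (DirectSum.decompose ℬ (φ r)).support,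
          ((DirectSum.decompose ℬ (φ r) k : A) • t) := by
      rw [← Finset.sum_smul]
      rw [DirectSum.sum_support_decompose ℬ (φ r)]
    rw [hrepr, DirectSum.decompose_sum]
    rw [DFinsupp.finset_sum_apply]
    rw [AddSubmonoidClass.coe_finset_sum]
    apply Finset.sum_eq_zero
    intro k _
    by_cases hk : k ≤ N₀
    · rw [hφr r k hk, zero_smul]
      simp
    · push_neg at hk
      have hmem : (DirectSum.decompose ℬ (φ r) k : A) • t ∈ 𝒯 (k + j) :=
        SetLike.GradedSMul.smul_mem (DirectSum.decompose ℬ (φ r) k).2 ht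
      exact DirectSum.decompose_of_mem_ne 𝒯 hmem (by omega)
  intro x hx n hn
  rw [Submodule.mem_span_set'] at hx
  obtain ⟨p, f, g, hsum⟩ := hx
  rw [← hsum, DirectSum.decompose_sum, DFinsupp.finset_sum_apply,
    AddSubmonoidClass.coe_finset_sum]
  apply Finset.sum_eq_zero
  intro i _
  obtain ⟨t, ht⟩ := g i
  simp only [Set.mem_iUnion, SetLike.mem_coe, exists_prop] at ht
  obtain ⟨j, hj, htj⟩ := ht
  exact key (f i) t j hj htj n hn
end

section
/- Let R = ⊕_{n∈ℤ} R^n and A = ⊕_{n∈ℤ} A^n be ℤ-graded rings and let φ : R → A be a ring homomorphism with φ(R^n) ⊆ A^n for all n ∈ ℤ. Suppose that A, regarded as a ℤ-graded R-module via φ, has bounded finitely generated submodules. If T is a ℤ-graded left A-module such that for every integer m there exists n < m with T^n ≠ 0, then T, regarded as an R-module via φ, is not finitely generated. -/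
open DirectSum

lemma exists_lower_bound {T : Type*} [AddCommGroup T] (𝒯 : ℤ → AddSubgroup T)
    [DirectSum.Decomposition 𝒯] (t : T) :
    ∃ b : ℤ, ∀ k ≤ b, (decompose 𝒯 t k : T) = 0 := by
  classical
  have hfin : (↑(DFinsupp.support (decompose 𝒯 t)) : Set ℤ).Finite :=
    (DFinsupp.support _).finite_toSet
  obtain ⟨b, hb⟩ := hfin.bddBelow
  refine ⟨b - 1, fun k hk => ?_⟩
  by_contra h
  have hmem : k ∈ DFinsupp.support (decompose 𝒯 t) := by
    rw [DFinsupp.mem_support_iff]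
    intro h0
    exact h (by rw [h0]; rfl)
  have := hb hmem
  omega

/-- Let `φ : R → A` be a degree-preserving ring homomorphism of ℤ-graded rings such that `A`,
regarded as a ℤ-graded `R`-module via `φ`, has bounded finitely generated submodules.  If `T`
is a ℤ-graded left `A`-module with `T^n ≠ 0` for arbitrarily negative `n`, then `T`, regarded
as an `R`-module via `φ`, is not finitely generated. -/
theorem not_finite_over_base_of_gradedRingHom
    {R A T : Type*} [Ring R] [Ring A] [AddCommGroup T]
    (𝒜 : ℤ → AddSubgroup R) (ℬ : ℤ → AddSubgroup A) (𝒯 : ℤ → AddSubgroup T)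
    [GradedRing 𝒜] [GradedRing ℬ] [DirectSum.Decomposition 𝒯]
    [Module A T] [SetLike.GradedSMul ℬ 𝒯]
    (φ : R →+* A) (hφ : ∀ n : ℤ, ∀ r ∈ 𝒜 n, φ r ∈ ℬ n)
    [Module R A] (hRA : ∀ (r : R) (x : A), r • x = φ r * x)
    [Module R T] (hRT : ∀ (r : R) (t : T), r • t = φ r • t)
    (hA : HasBoundedFGSubmodules (R := R) ℬ)
    (hneg : ∀ m : ℤ, ∃ n < m, 𝒯 n ≠ ⊥) :
    ¬ Module.Finite R T := by
  classical
  intro hfin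
  obtain ⟨S, hS⟩ := hfin.fg_top
  obtain ⟨N, hN⟩ := hA (-1)
  -- every φ r has homogeneous components only in degrees > N
  have hφN : ∀ r : R, ∀ d ≤ N, (decompose ℬ (φ r) d : A) = 0 := by
    intro r d hd
    refine hN _ ?_ d hd
    have h1 : (1 : A) ∈ Submodule.span R (⋃ n > (-1 : ℤ), (ℬ n : Set A)) := by
      apply Submodule.subset_span
      exact Set.mem_iUnion₂.mpr ⟨0, by norm_num, SetLike.one_mem_graded _⟩
    have := Submodule.smul_mem _ r h1
    rwa [hRA, mul_one] at this
  -- a uniform lower bound for the components of the generators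
  have hbs : ∀ s : T, ∃ b : ℤ, ∀ k ≤ b, (decompose 𝒯 s k : T) = 0 :=
    exists_lower_bound 𝒯
  choose g hg using hbs
  obtain ⟨b0, hb0⟩ := ((S.image g).finite_toSet).bddBelow
  have hSb : ∀ s ∈ S, ∀ k ≤ b0, (decompose 𝒯 s k : T) = 0 := by
    intro s hs k hk
    have : b0 ≤ g s := hb0 (Finset.mem_coe.mpr (Finset.mem_image_of_mem g hs))
    exact hg s k (le_trans hk this)
  -- key: each r • s has components only in degrees > N + b0 + 1
  have hkey : ∀ (r : R), ∀ s ∈ S, ∀ n ≤ N + b0 + 1, (decompose 𝒯 (r • s) n : T) = 0 := by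
    intro r s hs n hn
    rw [hRT]
    set a := φ r with ha
    conv_lhs => rw [← DirectSum.sum_support_decompose ℬ a,
      ← DirectSum.sum_support_decompose 𝒯 s]
    rw [Finset.sum_smul]
    simp_rw [Finset.smul_sum]
    rw [DirectSum.decompose_sum]
    rw [DFinsupp.finset_sum_apply, AddSubmonoidClass.coe_finset_sum]
    refine Finset.sum_eq_zero fun i hi => ?_
    rw [DirectSum.decompose_sum, DFinsupp.finset_sum_apply, AddSubmonoidClass.coe_finset_sum]
    refine Finset.sum_eq_zero fun j hj => ?_
    have hiN : N < i := by
      by_contra h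
      push_neg at h
      have := hφN r i h
      rw [DFinsupp.mem_support_iff] at hi
      exact hi (Subtype.ext this)
    have hjb : b0 < j := by
      by_contra h
      push_neg at h
      have := hSb s hs j h
      rw [DFinsupp.mem_support_iff] at hj
      exact hj (Subtype.ext this)
    have hmem := SetLike.GradedSMul.smul_mem (SetLike.coe_mem (decompose ℬ a i))
      (SetLike.coe_mem (decompose 𝒯 s j))
    rw [vadd_eq_add] at hmem
    exact DirectSum.decompose_of_mem_ne 𝒯 hmem (by omega)
  -- hence all of T has components only in degrees > N + b0 + 1
  have hall : ∀ (x : T), ∀ n ≤ N + b0 + 1, (decompose 𝒯 x n : T) = 0 := by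
    intro x n hn
    have hx : x ∈ Submodule.span R (S : Set T) := hS ▸ Submodule.mem_top
    obtain ⟨c, -, hsum⟩ := Submodule.mem_span_finset.mp hx
    rw [← hsum, DirectSum.decompose_sum, DFinsupp.finset_sum_apply,
      AddSubmonoidClass.coe_finset_sum]
    exact Finset.sum_eq_zero fun s hs => hkey (c s) s hs n hn
  obtain ⟨n, hn, hne⟩ := hneg (N + b0 + 1)
  rw [AddSubgroup.ne_bot_iff_exists_ne_zero] at hne
  obtain ⟨⟨t, ht⟩, ht0⟩ := hne
  have : (decompose 𝒯 t n : T) = t := DirectSum.decompose_of_mem_same 𝒯 ht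
  have hz := hall t n (by omega)
  apply ht0
  ext
  simp only [AddSubgroup.coe_mk, ZeroMemClass.coe_zero]
  rw [← this, hz]
end

section
/- Let k be a field and let R = ⊕_{n∈ℤ} R^n be a ℤ-graded associative unital k-algebra with each homogeneous component R^n finite-dimensional over k. Suppose there is a k-linear map λ : R^{-1} → k such that for every integer t the bilinear pairing R^{-t-1} × R^t → k, (a,b) ↦ λ(ab), is nondegenerate in both variables. Let d > 0 and let ζ ∈ R^d be such that for every n ≥ 0 the left-multiplication map R^n → R^{n+d}, r ↦ ζr, is injective. Then for every m < 0 the right-multiplication map R^{m-d} → R^m, r ↦ rζ, is surjective. -/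
/-- If `a` has degree `-t-1` and `b` has degree `t`, then `a * b` has degree `-1`. -/
lemma mul_mem_neg_one {k R : Type*} [CommSemiring k] [Semiring R] [Algebra k R]
    (𝒜 : ℤ → Submodule k R) [SetLike.GradedMonoid 𝒜] {t : ℤ} {a b : R}
    (ha : a ∈ 𝒜 (-t - 1)) (hb : b ∈ 𝒜 t) : a * b ∈ 𝒜 (-1) := by
  have h := SetLike.mul_mem_graded ha hb
  rwa [show -t - 1 + t = -1 by ring] at h

/-- The bilinear pairing `𝒜 i × 𝒜 j → k` given by `λ(a*b)` when `i + j = -1`. -/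
noncomputable def auxPairing {k R : Type*} [Field k] [Ring R] [Algebra k R]
    (𝒜 : ℤ → Submodule k R) [GradedAlgebra 𝒜] (lam : 𝒜 (-1 : ℤ) →ₗ[k] k)
    (i j : ℤ) (hij : i + j = -1) : 𝒜 i →ₗ[k] 𝒜 j →ₗ[k] k :=
  LinearMap.mk₂ k
    (fun a b => lam ⟨(a : R) * b, hij ▸ SetLike.mul_mem_graded a.2 b.2⟩)
    (fun a a' b => by rw [← map_add]; exact congrArg lam (Subtype.ext (by simp [add_mul])))
    (fun c a b => by rw [← map_smul]; exact congrArg lam (Subtype.ext (by simp [smul_mul_assoc])))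
    (fun a b b' => by rw [← map_add]; exact congrArg lam (Subtype.ext (by simp [mul_add])))
    (fun c a b => by rw [← map_smul]; exact congrArg lam (Subtype.ext (by simp [mul_smul_comm])))

/-- Let `R` be a ℤ-graded `k`-algebra with finite-dimensional homogeneous components, and
suppose `λ : R^{-1} → k` is a `k`-linear map such that all pairings
`R^{-t-1} × R^t → k`, `(a, b) ↦ λ(ab)`, are nondegenerate in both variables
(an abstraction of Tate duality).  If `ζ ∈ R^d` with `d > 0` is such that left
multiplication by `ζ` is injective on `R^n` for all `n ≥ 0`, then right multiplication by
`ζ` maps `R^{m-d}` onto `R^m` for every `m < 0`. -/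
theorem surjective_right_mul_of_injective_left_mul
    {k R : Type*} [Field k] [Ring R] [Algebra k R]
    (𝒜 : ℤ → Submodule k R) [GradedAlgebra 𝒜]
    (hfin : ∀ n : ℤ, FiniteDimensional k (𝒜 n))
    (lam : 𝒜 (-1 : ℤ) →ₗ[k] k)
    (hndl : ∀ (t : ℤ) (a : R) (ha : a ∈ 𝒜 (-t - 1)),
      (∀ (b : R) (hb : b ∈ 𝒜 t), lam ⟨a * b, mul_mem_neg_one 𝒜 ha hb⟩ = 0) → a = 0)
    (hndr : ∀ (t : ℤ) (b : R) (hb : b ∈ 𝒜 t),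
      (∀ (a : R) (ha : a ∈ 𝒜 (-t - 1)), lam ⟨a * b, mul_mem_neg_one 𝒜 ha hb⟩ = 0) → b = 0)
    (d : ℤ) (hd : 0 < d) (ζ : R) (hζ : ζ ∈ 𝒜 d)
    (hreg : ∀ n : ℤ, 0 ≤ n → ∀ r ∈ 𝒜 n, ∀ s ∈ 𝒜 n, ζ * r = ζ * s → r = s) :
    ∀ m : ℤ, m < 0 → ∀ y ∈ 𝒜 m, ∃ r ∈ 𝒜 (m - d), r * ζ = y := by
  intro m hm y hy
  haveI := hfin m
  haveI := hfin (-m - 1)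
  haveI := hfin (m - d)
  -- the pairing `𝒜 m × 𝒜 (-m-1) → k`
  set P : 𝒜 m →ₗ[k] 𝒜 (-m - 1) →ₗ[k] k := auxPairing 𝒜 lam m (-m - 1) (by ring) with hP
  -- `B : 𝒜 (-m-1) → Dual (𝒜 m)`
  set B : 𝒜 (-m - 1) →ₗ[k] Module.Dual k (𝒜 m) := P.flip with hB
  have hBinj : Function.Injective B := by
    rw [injective_iff_map_eq_zero]
    intro b hb0
    have hmem : (b : R) ∈ 𝒜 (-m - 1) := b.2
    have := hndr (-m - 1) (b : R) hmem (fun a ha => by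
      have h1 : a ∈ 𝒜 m := by rwa [show (-(-m - 1) - 1 : ℤ) = m by ring] at ha
      have := congrArg (fun φ => φ ⟨a, h1⟩) hb0
      exact this)
    exact Subtype.ext this
  have hAinj : Function.Injective P := by
    rw [injective_iff_map_eq_zero]
    intro a ha0
    have h1 : (a : R) ∈ 𝒜 (-(-m - 1) - 1) := by
      rw [show (-(-m - 1) - 1 : ℤ) = m by ring]; exact a.2
    have := hndl (-m - 1) (a : R) h1 (fun b hb => by
      have := congrArg (fun φ => φ ⟨b, hb⟩) ha0
      exact this)
    exact Subtype.ext this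
  have hrank : Module.finrank k (𝒜 (-m - 1)) = Module.finrank k (Module.Dual k (𝒜 m)) := by
    have e1 : Module.finrank k (𝒜 (-m - 1)) ≤ Module.finrank k (Module.Dual k (𝒜 m)) :=
      LinearMap.finrank_le_finrank_of_injective hBinj
    have e2 : Module.finrank k (𝒜 m) ≤ Module.finrank k (Module.Dual k (𝒜 (-m - 1))) :=
      LinearMap.finrank_le_finrank_of_injective hAinj
    rw [Subspace.dual_finrank_eq] at *
    omega
  have hBsurj : Function.Surjective B :=
    (LinearMap.injective_iff_surjective_of_finrank_eq_finrank hrank).mp hBinj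
  -- right multiplication by ζ
  set T : 𝒜 (m - d) →ₗ[k] 𝒜 m :=
    { toFun := fun r => ⟨(r : R) * ζ, by
        have := SetLike.mul_mem_graded r.2 hζ
        rwa [show m - d + d = m by ring] at this⟩
      map_add' := fun r s => Subtype.ext (by simp [add_mul])
      map_smul' := fun c r => Subtype.ext (by simp [smul_mul_assoc]) } with hT
  set U : Submodule k (𝒜 m) := LinearMap.range T with hU
  suffices hyU : (⟨y, hy⟩ : 𝒜 m) ∈ U by
    obtain ⟨r, hr⟩ := hyU
    exact ⟨(r : R), r.2, congrArg Subtype.val hr⟩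
  rw [← Submodule.Quotient.mk_eq_zero,
    ← Module.forall_dual_apply_eq_zero_iff k (Submodule.Quotient.mk (⟨y, hy⟩ : 𝒜 m))]
  intro f
  obtain ⟨b, hb⟩ := hBsurj (f ∘ₗ U.mkQ)
  -- every value of `B b` on the range of `T` vanishes
  have hvanish : ∀ r : 𝒜 (m - d), (B b) (T r) = 0 := by
    intro r
    rw [hb]
    show f (U.mkQ (T r)) = 0
    have : U.mkQ (T r) = 0 := (Submodule.Quotient.mk_eq_zero U).mpr ⟨r, rfl⟩
    rw [this, map_zero]
  -- hence `ζ * b = 0`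
  have hζbmem : ζ * (b : R) ∈ 𝒜 (d - m - 1) := by
    have := SetLike.mul_mem_graded hζ b.2
    rwa [show d + (-m - 1) = d - m - 1 by ring] at this
  have hζb : ζ * (b : R) = 0 := by
    apply hndr (d - m - 1) (ζ * (b : R)) hζbmem
    intro a ha
    have ha' : a ∈ 𝒜 (m - d) := by rwa [show (-(d - m - 1) - 1 : ℤ) = m - d by ring] at ha
    have h0 := hvanish ⟨a, ha'⟩
    have hmem2 : a * ζ ∈ 𝒜 (-(-m - 1) - 1) := by
      rw [show (-(-m - 1) - 1 : ℤ) = m by ring]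
      have := SetLike.mul_mem_graded ha' hζ
      rwa [show m - d + d = m by ring] at this
    have h1 : (B b) (T ⟨a, ha'⟩) = lam ⟨a * ζ * (b : R), mul_mem_neg_one 𝒜 hmem2 b.2⟩ := rfl
    rw [h1] at h0
    have e : (⟨a * (ζ * (b : R)), mul_mem_neg_one 𝒜 ha hζbmem⟩ : 𝒜 (-1 : ℤ)) =
        ⟨a * ζ * (b : R), mul_mem_neg_one 𝒜 hmem2 b.2⟩ :=
      Subtype.ext (mul_assoc a ζ (b : R)).symm
    show lam ⟨a * (ζ * (b : R)), mul_mem_neg_one 𝒜 ha hζbmem⟩ = 0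
    rw [e]; exact h0
  have hb0 : b = 0 := by
    have := hreg (-m - 1) (by omega) (b : R) b.2 0 (zero_mem _) (by rw [mul_zero, hζb])
    exact Subtype.ext this
  have hφ0 : f (U.mkQ ⟨y, hy⟩) = 0 := by
    have : (f ∘ₗ U.mkQ) ⟨y, hy⟩ = (B b) ⟨y, hy⟩ := by rw [hb]
    rw [hb0, map_zero] at this
    simpa using this
  exact hφ0
end

section
/- Let R = ⊕_{n∈ℤ} R^n be a ℤ-graded ring in which the product of any two homogeneous elements of negative degree is zero (R^a · R^b = 0 whenever a < 0 and b < 0). Let K be a graded left ideal of R, i.e., an R-submodule of R with K = ⊕_{n∈ℤ} K^n where K^n = K ∩ R^n. Suppose K^n = 0 for all n ≥ 0, and suppose that for every integer m there exists n < m with K^n ≠ 0. Then K is not finitely generated as an R-module. -/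
open DirectSum

/-- Let `R` be a ℤ-graded ring in which the product of any two homogeneous elements of
negative degree is zero, and let `K` be a graded left ideal of `R` with `K^n = 0` for all
`n ≥ 0` but `K^n ≠ 0` for arbitrarily negative `n`.  Then `K` is not finitely generated
as an `R`-module. -/
theorem not_fg_of_negatively_graded_ideal
    {R : Type*} [Ring R] (𝒜 : ℤ → AddSubgroup R) [GradedRing 𝒜]
    (hnegmul : ∀ a b : ℤ, a < 0 → b < 0 → ∀ x ∈ 𝒜 a, ∀ y ∈ 𝒜 b, x * y = 0)
    (K : Submodule R R)
    (hgraded : ∀ x ∈ K, ∀ n : ℤ, (DirectSum.decompose 𝒜 x n : R) ∈ K)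
    (hnonneg : ∀ n : ℤ, 0 ≤ n → ∀ x ∈ K, x ∈ 𝒜 n → x = 0)
    (hneg : ∀ m : ℤ, ∃ n < m, ∃ x ∈ K, x ∈ 𝒜 n ∧ x ≠ 0) :
    ¬ K.FG := by
  classical
  rintro ⟨S, hK⟩
  -- set of degrees appearing in components of generators
  set D : Finset ℤ := S.biUnion (fun s => (DirectSum.decompose 𝒜 s).support) with hD
  obtain ⟨m, hm⟩ : ∃ m : ℤ, ∀ d ∈ D, m ≤ d :=
    ⟨(insert 0 D).min' ⟨0, Finset.mem_insert_self _ _⟩,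
      fun d hd => Finset.min'_le _ _ (Finset.mem_insert_of_mem hd)⟩
  obtain ⟨n, hnm, x, hxK, hxA, hx0⟩ := hneg m
  have hxS : x ∈ Submodule.span R (↑S : Set R) := hK ▸ hxK
  obtain ⟨f, -, hf⟩ := Submodule.mem_span_finset.1 hxS
  apply hx0
  have hx : (DirectSum.decompose 𝒜 x n : R) = x := DirectSum.decompose_of_mem_same 𝒜 hxA
  rw [← hx, ← hf]
  have : ∀ s ∈ S, (DirectSum.decompose 𝒜 (f s • s) n : R) = 0 := by
    intro s hs
    have hsK : s ∈ K := hK ▸ Submodule.subset_span hs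
    -- expand s into homogeneous components
    have hexp : f s • s = ∑ d ∈ (DirectSum.decompose 𝒜 s).support,
        f s * (DirectSum.decompose 𝒜 s d : R) := by
      rw [smul_eq_mul, ← Finset.mul_sum, DirectSum.sum_support_decompose]
    rw [hexp, DirectSum.decompose_sum, DFinsupp.finset_sum_apply,
      AddSubmonoidClass.coe_finset_sum]
    apply Finset.sum_eq_zero
    intro d hd
    have hmd : m ≤ d := hm d (Finset.mem_biUnion.2 ⟨s, hs, hd⟩)
    have hcomp : (DirectSum.decompose 𝒜 s d : R) ∈ 𝒜 d := (DirectSum.decompose 𝒜 s d).2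
    have hne : (DirectSum.decompose 𝒜 s d : R) ≠ 0 := by
      intro h
      exact DFinsupp.mem_support_iff.1 hd (Subtype.ext h)
    have hdneg : d < 0 := by
      by_contra h
      exact hne (hnonneg d (le_of_not_gt h) _ (hgraded s hsK d) hcomp)
    have key : (DirectSum.decompose 𝒜 (f s * (DirectSum.decompose 𝒜 s d : R)) n : R)
        = (DirectSum.decompose 𝒜 (f s) (n - d) : R) * (DirectSum.decompose 𝒜 s d : R) := by
      have := DirectSum.coe_decompose_mul_add_of_right_mem 𝒜 (i := n - d) (j := d)
        (a := f s) hcomp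
      rwa [sub_add_cancel] at this
    rw [key]
    exact hnegmul (n - d) d (by omega) hdneg _
      (DirectSum.decompose 𝒜 (f s) (n - d)).2 _ hcomp
  rw [DirectSum.decompose_sum, DFinsupp.finset_sum_apply, AddSubmonoidClass.coe_finset_sum]
  exact Finset.sum_eq_zero this
end

section
/- Let R = ⊕_{n∈ℤ} R^n be a ℤ-graded ring and let K be a graded left ideal of R (an R-submodule of R with K = ⊕_{n∈ℤ} K^n, K^n = K ∩ R^n). Suppose: (i) the non-negative part ⊕_{n≥0} K^n is finitely generated as a module over the subring R^{≥0} = ⊕_{n≥0} R^n; and (ii) there exist an integer n₀ ≥ 0 and an element γ ∈ K^{n₀} such that for every m < 0 one has {rγ : r ∈ R^{m-n₀}} = R^m. Then K is finitely generated as an R-module. -/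
open DirectSum

/-- Let `R` be a ℤ-graded ring and `K` a graded left ideal of `R`.  Suppose that
(i) the non-negative part `⊕_{n ≥ 0} K^n` of `K` is finitely generated as a module over the
subring `R^{≥ 0} = ⊕_{n ≥ 0} R^n` (expressed below: there is a finite set `S` of elements
of `K` supported in non-negative degrees such that every element of `K` supported in
non-negative degrees lies in the additive subgroup generated by the products `r * g` with
`r ∈ R^{≥0}` and `g ∈ S`), and
(ii) there are `n₀ ≥ 0` and `γ ∈ K ∩ R^{n₀}` such that for every `m < 0` right
multiplication by `γ` maps `R^{m - n₀}` onto `R^m`.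
Then `K` is finitely generated as an `R`-module. -/
theorem fg_of_nonneg_fg_and_surjective_mul
    {R : Type*} [Ring R] (𝒜 : ℤ → AddSubgroup R) [GradedRing 𝒜]
    (K : Submodule R R)
    (hgraded : ∀ x ∈ K, ∀ n : ℤ, (DirectSum.decompose 𝒜 x n : R) ∈ K)
    (hfg : ∃ S : Finset R,
      (∀ g ∈ S, g ∈ K ∧ ∀ n : ℤ, n < 0 → (DirectSum.decompose 𝒜 g n : R) = 0) ∧
      (∀ x ∈ K, (∀ n : ℤ, n < 0 → (DirectSum.decompose 𝒜 x n : R) = 0) →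
        x ∈ AddSubgroup.closure
          {y : R | ∃ r g : R, (∀ n : ℤ, n < 0 → (DirectSum.decompose 𝒜 r n : R) = 0) ∧
            g ∈ S ∧ y = r * g}))
    (hγ : ∃ n₀ : ℤ, 0 ≤ n₀ ∧ ∃ γ ∈ K, γ ∈ 𝒜 n₀ ∧
      ∀ m : ℤ, m < 0 → ∀ y ∈ 𝒜 m, ∃ r ∈ 𝒜 (m - n₀), r * γ = y) :
    K.FG := by
  classical
  obtain ⟨S, hS, hSgen⟩ := hfg
  obtain ⟨n₀, hn₀, γ, hγK, hγmem, hsurj⟩ := hγ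
  refine ⟨insert γ S, le_antisymm ?_ ?_⟩
  · rw [Submodule.span_le]
    intro g hg
    rcases Finset.mem_insert.mp (by exact_mod_cast hg) with h | h
    · exact h ▸ hγK
    · exact (hS g h).1
  · intro x hx
    set M := Submodule.span R (↑(insert γ S) : Set R) with hM
    have key : ∀ m : ℤ, m < 0 → ∀ y ∈ 𝒜 m, y ∈ M := by
      intro m hm y hy
      obtain ⟨r, -, hr⟩ := hsurj m hm y hy
      rw [← hr]
      exact Submodule.smul_mem _ r (Submodule.subset_span (by simp))
    set neg := (decompose 𝒜 x).support.filter (fun n => n < 0) with hnegdef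
    set xneg := ∑ n ∈ neg, (decompose 𝒜 x n : R) with hxnegdef
    have hxnegM : xneg ∈ M :=
      Submodule.sum_mem _ fun n hn =>
        key n (Finset.mem_filter.mp hn).2 _ (SetLike.coe_mem _)
    have hxnegK : xneg ∈ K := Submodule.sum_mem _ fun n _ => hgraded x hx n
    have hxpK : x - xneg ∈ K := K.sub_mem hx hxnegK
    have hdec : ∀ n : ℤ, (decompose 𝒜 xneg n : R) =
        if n ∈ neg then (decompose 𝒜 x n : R) else 0 := by
      intro n
      have : (decompose 𝒜 xneg n : R) =
          ∑ m ∈ neg, (decompose 𝒜 ((decompose 𝒜 x m : R)) n : R) := by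
        rw [hxnegdef, decompose_sum, DFinsupp.finset_sum_apply]
        exact AddSubmonoidClass.coe_finset_sum _ _
      rw [this]
      by_cases hn : n ∈ neg
      · rw [if_pos hn, Finset.sum_eq_single_of_mem n hn]
        · rw [decompose_of_mem_same 𝒜 (SetLike.coe_mem _)]
        · intro m _ hmn
          rw [decompose_of_mem_ne 𝒜 (SetLike.coe_mem _) hmn]
      · simp only [if_neg hn]
        apply Finset.sum_eq_zero
        intro m hm
        rw [decompose_of_mem_ne 𝒜 (SetLike.coe_mem _) (by rintro rfl; exact hn hm)]
    have hxpzero : ∀ n : ℤ, n < 0 → (decompose 𝒜 (x - xneg) n : R) = 0 := by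
      intro n hn
      rw [decompose_sub, DFinsupp.sub_apply, AddSubgroup.coe_sub, hdec n]
      by_cases hmem : n ∈ neg
      · rw [if_pos hmem, sub_self]
      · rw [if_neg hmem, sub_zero]
        have : n ∉ (decompose 𝒜 x).support := fun h =>
          hmem (Finset.mem_filter.mpr ⟨h, hn⟩)
        rw [DFinsupp.notMem_support_iff.mp this]
        rfl
    have hcl := hSgen _ hxpK hxpzero
    have hclM : x - xneg ∈ M := by
      refine AddSubgroup.closure_le (M.toAddSubgroup) |>.mpr ?_ hcl
      rintro y ⟨r, g, -, hgS, rfl⟩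
      exact Submodule.smul_mem _ r (Submodule.subset_span (by simp [hgS]))
    have := M.add_mem hclM hxnegM
    rwa [sub_add_cancel] at this
end

section
/- Let C be a pretriangulated category with shift indexed by ℤ, and let k and M be objects of C. Suppose there are finitely many integers n_1, …, n_r and morphisms θ_j : k⟦n_j⟧ → M such that for every integer t, every morphism γ : k⟦t⟧ → M can be written as γ = Σ_{j=1}^r θ_j ∘ r_j for some morphisms r_j : k⟦t⟧ → k⟦n_j⟧. Then there exist an object F and a morphism Ψ : M → F such that: (a) Ψ is a ghost with respect to k; and (b) every ghost f : M → X with respect to k factors as f = h ∘ Ψ for some morphism h : F → X. Moreover, Ψ can be taken to be the second morphism in a distinguished triangle ⊕_{j=1}^r k⟦n_j⟧ → M → F → (⊕_j k⟦n_j⟧)⟦1⟧ whose first morphism has components θ_j. -/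
open CategoryTheory CategoryTheory.Limits CategoryTheory.Pretriangulated

/-- A morphism `f : M ⟶ X` is a *ghost* with respect to an object `k` if the composite
`k⟦n⟧ ⟶ M ⟶ X` vanishes for every integer `n` and every map `k⟦n⟧ ⟶ M`. -/
def IsGhost {C : Type*} [Category C] [Preadditive C] [HasShift C ℤ]
    (k : C) {M X : C} (f : M ⟶ X) : Prop :=
  ∀ (n : ℤ) (g : k⟦n⟧ ⟶ M), g ≫ f = 0

/-- If the maps `θ_j : k⟦n_j⟧ ⟶ M`, `j = 1, …, r`, generate all maps `k⟦t⟧ ⟶ M` in the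
sense that every such map is a sum `Σ_j r_j ≫ θ_j`, then completing
`biproduct.desc θ : ⊕_j k⟦n_j⟧ ⟶ M` to a distinguished triangle yields a universal ghost
`Ψ : M ⟶ F` out of `M`: `Ψ` is a ghost with respect to `k`, and every ghost out of `M`
factors through `Ψ`. -/
theorem exists_universal_ghost
    {C : Type*} [Category C] [HasZeroObject C] [Preadditive C] [HasShift C ℤ]
    [∀ n : ℤ, (shiftFunctor C n).Additive] [Pretriangulated C] [HasFiniteBiproducts C]
    (k M : C) (r : ℕ) (n : Fin r → ℤ) (θ : ∀ j : Fin r, k⟦n j⟧ ⟶ M)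
    (hgen : ∀ (t : ℤ) (γ : k⟦t⟧ ⟶ M),
      ∃ ρ : ∀ j : Fin r, (k⟦t⟧ ⟶ k⟦n j⟧), γ = ∑ j : Fin r, ρ j ≫ θ j) :
    ∃ (F : C) (Ψ : M ⟶ F) (δ : F ⟶ (⨁ fun j : Fin r => k⟦n j⟧)⟦(1 : ℤ)⟧),
      (Triangle.mk (biproduct.desc θ) Ψ δ ∈ distTriang C) ∧
      IsGhost k Ψ ∧
      ∀ (X : C) (f : M ⟶ X), IsGhost k f → ∃ h : F ⟶ X, f = Ψ ≫ h := by
  obtain ⟨F, Ψ, δ, hT⟩ := distinguished_cocone_triangle (biproduct.desc θ)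
  refine ⟨F, Ψ, δ, hT, ?_, ?_⟩
  · intro t g
    obtain ⟨ρ, hρ⟩ := hgen t g
    have h0 : biproduct.desc θ ≫ Ψ = 0 := comp_distTriang_mor_zero₁₂ _ hT
    have : g = biproduct.lift ρ ≫ biproduct.desc θ := by
      simp [hρ, biproduct.lift_desc]
    rw [this, Category.assoc, h0, comp_zero]
  · intro X f hf
    have h0 : biproduct.desc θ ≫ f = 0 := by
      ext j
      simpa using hf (n j) (θ j)
    obtain ⟨h, hh⟩ := Triangle.yoneda_exact₂ _ hT f h0
    exact ⟨h, hh⟩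
end

section
/- Let C be a pretriangulated category with shift indexed by ℤ and let k be an object of C. Suppose P →θ M →ρ N → P⟦1⟧ is a distinguished triangle in C such that P is a finite biproduct ⊕_{j=1}^r k⟦n_j⟧ for some integers n_1, …, n_r, and such that ρ is a ghost with respect to k. Then for every integer t, every morphism γ : k⟦t⟧ → M can be written as γ = Σ_{j=1}^r θ_j ∘ r_j for some morphisms r_j : k⟦t⟧ → k⟦n_j⟧, where θ_j : k⟦n_j⟧ → M is the composite of the j-th biproduct inclusion with θ. -/
open CategoryTheory CategoryTheory.Limits CategoryTheory.Pretriangulated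

/-- Suppose `P ⟶ M ⟶ N ⟶ P⟦1⟧` is a distinguished triangle in which `P = ⊕_j k⟦n_j⟧` is a
finite biproduct of shifts of `k` and the second map `ρ` is a ghost with respect to `k`.
Then the components `θ_j = ι_j ≫ θ` of the first map generate all maps from shifts of `k`
to `M`: every `γ : k⟦t⟧ ⟶ M` can be written as `Σ_j r_j ≫ θ_j`. -/
theorem generators_of_ghost_triangle
    {C : Type*} [Category C] [HasZeroObject C] [Preadditive C] [HasShift C ℤ]
    [∀ n : ℤ, (shiftFunctor C n).Additive] [Pretriangulated C] [HasFiniteBiproducts C]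
    (k M N : C) (r : ℕ) (n : Fin r → ℤ)
    (θ : (⨁ fun j : Fin r => k⟦n j⟧) ⟶ M) (ρ : M ⟶ N)
    (δ : N ⟶ (⨁ fun j : Fin r => k⟦n j⟧)⟦(1 : ℤ)⟧)
    (hdist : Triangle.mk θ ρ δ ∈ distTriang C)
    (hghost : IsGhost k ρ) :
    ∀ (t : ℤ) (γ : k⟦t⟧ ⟶ M),
      ∃ ρ' : ∀ j : Fin r, (k⟦t⟧ ⟶ k⟦n j⟧),
        γ = ∑ j : Fin r, ρ' j ≫ (biproduct.ι (fun j : Fin r => k⟦n j⟧) j ≫ θ) := by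
  intro t γ
  obtain ⟨g, hg⟩ := Triangle.coyoneda_exact₂ _ hdist γ (hghost t γ)
  refine ⟨fun j => g ≫ biproduct.π _ j, ?_⟩
  rw [hg]
  show g ≫ θ = _
  conv_lhs => rw [← Category.id_comp θ, ← biproduct.total, Preadditive.sum_comp]
  erw [Preadditive.comp_sum]
  exact Finset.sum_congr rfl fun x _ => (congrArg (fun h => g ≫ h) (Category.assoc _ _ θ)).trans (Category.assoc g _ _).symm
end

section
/- Let p be an odd prime and k a field of characteristic p. Let G be the elementary abelian group (ℤ/pℤ) × (ℤ/pℤ), written multiplicatively with generators x and y, let kG be its group algebra, and let M = kG/I where I is the ideal of kG generated by (y−1)² and (x−1)(y−1). Then the image of y−1 in M is nonzero, it spans a one-dimensional kG-submodule of M on which G acts trivially (so this submodule is isomorphic to the trivial module k), and this submodule is not a direct summand of M as a kG-module; equivalently, the short exact sequence 0 → k → M → M/k·(y−1) → 0 of kG-modules is non-split. -/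
/-- The elementary abelian group `G = (ℤ/pℤ) × (ℤ/pℤ)`, written multiplicatively. -/
abbrev ElemAbelian (p : ℕ) : Type := Multiplicative (ZMod p × ZMod p)

/-- The generator `x` of `G`, viewed in the group algebra `kG`. -/
noncomputable def xGen (p : ℕ) (k : Type*) [Field k] : MonoidAlgebra k (ElemAbelian p) :=
  MonoidAlgebra.of k (ElemAbelian p) (Multiplicative.ofAdd ((1 : ZMod p), (0 : ZMod p)))

/-- The generator `y` of `G`, viewed in the group algebra `kG`. -/
noncomputable def yGen (p : ℕ) (k : Type*) [Field k] : MonoidAlgebra k (ElemAbelian p) :=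
  MonoidAlgebra.of k (ElemAbelian p) (Multiplicative.ofAdd ((0 : ZMod p), (1 : ZMod p)))

/-- The ideal `I = ((y-1)², (x-1)(y-1))` of `kG`. -/
noncomputable def genIdeal (p : ℕ) (k : Type*) [Field k] :
    Ideal (MonoidAlgebra k (ElemAbelian p)) :=
  Ideal.span {(yGen p k - 1) ^ 2, (xGen p k - 1) * (yGen p k - 1)}

/-- The `kG`-module `M = kG/I`. -/
abbrev genModule (p : ℕ) (k : Type*) [Field k] : Type _ :=
  MonoidAlgebra k (ElemAbelian p) ⧸ genIdeal p k

/-- The image `e` of `y - 1` in `M = kG/I`. -/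
noncomputable def eElt (p : ℕ) (k : Type*) [Field k] : genModule p k :=
  Ideal.Quotient.mk (genIdeal p k) (yGen p k - 1)

section Aux

variable (p : ℕ) (k : Type*) [Field k]

/-- The augmentation-type ideal `(x-1, y-1)`. -/
noncomputable def augJ : Ideal (MonoidAlgebra k (ElemAbelian p)) :=
  Ideal.span {xGen p k - 1, yGen p k - 1}

lemma pow_sub_one_mem {R : Type*} [CommRing R] (J : Ideal R) {u : R} (hu : u - 1 ∈ J) :
    ∀ n : ℕ, u ^ n - 1 ∈ J := by
  intro n
  induction n with
  | zero => simpa using J.zero_mem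
  | succ n ih =>
    have h : u ^ (n + 1) - 1 = u ^ n * (u - 1) + (u ^ n - 1) := by ring
    rw [h]
    exact J.add_mem (J.mul_mem_left _ hu) ih

lemma ofAdd_eq_pow [NeZero p] (g : ElemAbelian p) :
    g = (Multiplicative.ofAdd ((1 : ZMod p), (0 : ZMod p))) ^ (Multiplicative.toAdd g).1.val *
        (Multiplicative.ofAdd ((0 : ZMod p), (1 : ZMod p))) ^ (Multiplicative.toAdd g).2.val := by
  apply Multiplicative.toAdd.injective
  rw [toAdd_mul, toAdd_pow, toAdd_pow]
  simp [Prod.ext_iff, Prod.smul_mk, nsmul_eq_mul, ZMod.natCast_val, ZMod.cast_id]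

lemma of_sub_one_mem [NeZero p] (g : ElemAbelian p) :
    MonoidAlgebra.of k (ElemAbelian p) g - 1 ∈ augJ p k := by
  have hx : xGen p k - 1 ∈ augJ p k :=
    Ideal.subset_span (Set.mem_insert _ _)
  have hy : yGen p k - 1 ∈ augJ p k :=
    Ideal.subset_span (Set.mem_insert_of_mem _ rfl)
  have hgx : MonoidAlgebra.of k (ElemAbelian p) g
      = (xGen p k) ^ (Multiplicative.toAdd g).1.val * (yGen p k) ^ (Multiplicative.toAdd g).2.val := by
    conv_lhs => rw [ofAdd_eq_pow p g]
    rw [map_mul, map_pow, map_pow]; rfl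
  rw [hgx]
  rw [show (xGen p k) ^ (Multiplicative.toAdd g).1.val * (yGen p k) ^ (Multiplicative.toAdd g).2.val - 1
      = (xGen p k) ^ (Multiplicative.toAdd g).1.val * ((yGen p k) ^ (Multiplicative.toAdd g).2.val - 1)
        + ((xGen p k) ^ (Multiplicative.toAdd g).1.val - 1) from by ring]
  exact Ideal.add_mem _ (Ideal.mul_mem_left _ _ (pow_sub_one_mem _ hy _))
    (pow_sub_one_mem _ hx _)

lemma sub_one_mul_mem [NeZero p] (g : ElemAbelian p) :
    (MonoidAlgebra.of k (ElemAbelian p) g - 1) * (yGen p k - 1) ∈ genIdeal p k := by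
  obtain ⟨a, b, hab⟩ := Ideal.mem_span_pair.mp (of_sub_one_mem p k g)
  have h1 : (yGen p k - 1) ^ 2 ∈ genIdeal p k := Ideal.subset_span (Set.mem_insert _ _)
  have h2 : (xGen p k - 1) * (yGen p k - 1) ∈ genIdeal p k :=
    Ideal.subset_span (Set.mem_insert_of_mem _ rfl)
  rw [← hab, show (a * (xGen p k - 1) + b * (yGen p k - 1)) * (yGen p k - 1)
      = a * ((xGen p k - 1) * (yGen p k - 1)) + b * ((yGen p k - 1) ^ 2) from by ring]
  exact Ideal.add_mem _ (Ideal.mul_mem_left _ _ h2) (Ideal.mul_mem_left _ _ h1)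

variable [CharP k p]

/-- The monoid hom `G → k[ε]` sending `(i,j)` to `1 + jε`. -/
noncomputable def dualHom : ElemAbelian p →* DualNumber k where
  toFun g := 1 + TrivSqZeroExt.inr ((ZMod.castHom (dvd_refl p) k) (Multiplicative.toAdd g).2)
  map_one' := by simp
  map_mul' g h := by
    rw [toAdd_mul]
    simp only [Prod.snd_add, map_add, TrivSqZeroExt.inr_add, mul_add, add_mul, one_mul,
      mul_one, TrivSqZeroExt.inr_mul_inr, add_zero]
    abel

noncomputable def dualAlg : MonoidAlgebra k (ElemAbelian p) →ₐ[k] DualNumber k :=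
  MonoidAlgebra.lift k (DualNumber k) (ElemAbelian p) (dualHom p k)

lemma dualHom_apply (g : ElemAbelian p) :
    dualHom p k g = 1 + TrivSqZeroExt.inr ((ZMod.castHom (dvd_refl p) k) (Multiplicative.toAdd g).2) := rfl

lemma dualAlg_y : dualAlg p k (yGen p k - 1) = TrivSqZeroExt.inr 1 := by
  rw [map_sub, map_one]
  unfold yGen dualAlg
  rw [MonoidAlgebra.lift_of, dualHom_apply]
  simp

lemma dualAlg_x : dualAlg p k (xGen p k - 1) = 0 := by
  rw [map_sub, map_one]
  unfold xGen dualAlg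
  rw [MonoidAlgebra.lift_of, dualHom_apply]
  simp

lemma genIdeal_le_ker : genIdeal p k ≤ RingHom.ker (dualAlg p k) := by
  rw [genIdeal, Ideal.span_le]
  rintro z (rfl | rfl)
  · simp [RingHom.mem_ker, pow_two, map_mul, dualAlg_y, TrivSqZeroExt.inr_mul_inr]
  · simp [RingHom.mem_ker, map_mul, dualAlg_x]

lemma eElt_ne_zero : eElt p k ≠ 0 := by
  intro h
  rw [eElt, Ideal.Quotient.eq_zero_iff_mem] at h
  have := genIdeal_le_ker p k h
  rw [RingHom.mem_ker, dualAlg_y] at this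
  have h1 := congrArg TrivSqZeroExt.snd this
  simpa using h1

lemma mk_mul_smul (r a : MonoidAlgebra k (ElemAbelian p)) :
    r • (Ideal.Quotient.mk (genIdeal p k) a : genModule p k)
      = Ideal.Quotient.mk (genIdeal p k) (r * a) := by
  rw [← Ideal.Quotient.mk_eq_mk, ← Ideal.Quotient.mk_eq_mk, ← Submodule.Quotient.mk_smul,
    smul_eq_mul]

lemma smul_eElt [NeZero p] (g : ElemAbelian p) :
    (MonoidAlgebra.of k (ElemAbelian p) g) • eElt p k = eElt p k := by
  rw [eElt, mk_mul_smul, Ideal.Quotient.eq]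
  rw [show MonoidAlgebra.of k (ElemAbelian p) g * (yGen p k - 1) - (yGen p k - 1)
      = (MonoidAlgebra.of k (ElemAbelian p) g - 1) * (yGen p k - 1) from by ring]
  exact sub_one_mul_mem p k g

end Aux

set_option maxHeartbeats 1000000 in
/-- Let `p` be an odd prime, `k` a field of characteristic `p`, and
`G = (ℤ/pℤ) × (ℤ/pℤ)` with generators `x, y`.  Let `M = kG/I` where
`I = ((y-1)², (x-1)(y-1))` and let `e` be the image of `y - 1` in `M`.  Then `e ≠ 0`,
the `kG`-submodule of `M` generated by `e` is one-dimensional over `k` with trivial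
`G`-action (hence isomorphic to the trivial module `k`), and this submodule is not a
direct summand of `M` as a `kG`-module (equivalently, the extension
`0 → k → M → M/k·e → 0` is non-split). -/
theorem genModule_trivial_line_not_summand
    (p : ℕ) [Fact p.Prime] (hp : p ≠ 2) (k : Type*) [Field k] [CharP k p] :
    eElt p k ≠ 0 ∧
    (∀ g : ElemAbelian p, (MonoidAlgebra.of k (ElemAbelian p) g) • eElt p k = eElt p k) ∧
    Module.finrank k
      ((Submodule.span (MonoidAlgebra k (ElemAbelian p)) {eElt p k}).restrictScalars k) = 1 ∧
    ¬ ∃ N : Submodule (MonoidAlgebra k (ElemAbelian p)) (genModule p k),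
        IsCompl (Submodule.span (MonoidAlgebra k (ElemAbelian p)) {eElt p k}) N := by
  haveI : NeZero p := ⟨(Fact.out : p.Prime).ne_zero⟩
  have he := eElt_ne_zero p k
  have htriv := smul_eElt p k
  refine ⟨he, htriv, ?_, ?_⟩
  · have hspan : (Submodule.span (MonoidAlgebra k (ElemAbelian p)) {eElt p k}).restrictScalars k
        = Submodule.span k {eElt p k} := by
      have hsm : ∀ r : MonoidAlgebra k (ElemAbelian p),
          r • eElt p k ∈ Submodule.span k {eElt p k} := by
        intro r
        induction r using MonoidAlgebra.induction_on with
        | of g => rw [htriv g]; exact Submodule.mem_span_singleton_self _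
        | add f g hf hg => rw [add_smul]; exact Submodule.add_mem _ hf hg
        | smul c f hf => rw [smul_assoc]; exact Submodule.smul_mem _ c hf
      apply le_antisymm
      · intro z hz
        rw [Submodule.restrictScalars_mem] at hz
        obtain ⟨r, rfl⟩ := Submodule.mem_span_singleton.mp hz
        exact hsm r
      · rw [Submodule.span_le, Set.singleton_subset_iff]
        exact Submodule.mem_span_singleton_self _
    rw [hspan]
    exact finrank_span_singleton he
  · rintro ⟨N, hN⟩
    set I := genIdeal p k
    have hye : (yGen p k - 1) • eElt p k = 0 := by
      rw [eElt, mk_mul_smul, ← pow_two, Ideal.Quotient.eq_zero_iff_mem]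
      exact Ideal.subset_span (Set.mem_insert _ _)
    have hmem : (Ideal.Quotient.mk I 1 : genModule p k) ∈
        (Submodule.span (MonoidAlgebra k (ElemAbelian p)) {eElt p k}) ⊔ N := by
      rw [hN.sup_eq_top]
      exact Submodule.mem_top
    obtain ⟨s, hs, n, hn, hsum⟩ := Submodule.mem_sup.mp hmem
    have h1 : (yGen p k - 1) • (Ideal.Quotient.mk I 1 : genModule p k) = eElt p k := by
      rw [mk_mul_smul, mul_one]; rfl
    have hsz : (yGen p k - 1) • s = 0 := by
      obtain ⟨r, rfl⟩ := Submodule.mem_span_singleton.mp hs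
      rw [smul_smul, mul_comm, ← smul_smul, hye, smul_zero]
    have heN : eElt p k = (yGen p k - 1) • n := by
      rw [← h1, ← hsum, smul_add, hsz, zero_add]
    have heIn : eElt p k ∈ N := heN ▸ Submodule.smul_mem N _ hn
    have := hN.disjoint
    rw [Submodule.disjoint_def] at this
    exact he (this _ (Submodule.mem_span_singleton_self _) heIn)
end
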